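/- (Theorem 2, second bound) In the oblivious model, assume b_k r_k > 0 and r_k ζ_{nk} > 0 for all n, k ∈ {1,2}. Then limsup_{T→∞} (1/T) ∑_{t=1}^{T} (1/4) ∑_{m∈{1,2}} ∑_{k∈{1,2}} E[h_{mk}(t)] ≤ (1/2) ∑_{k∈{1,2}} [ (1 − b_k + b_k r_k)/(b_k r_k) + ∑_{n∈{1,2}} b_k^{(n)} (1 − r_k)/(r_k ζ_{nk}) ]. -/

import Mathlib

/-- Index type for the family of primitive random variables:
`inl (m, k, t)` indexes the request variable of user `m`, CP `k`, time `t`;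
`inr (n, k, t)` indexes the command indicator of eRRH `n`, CP `k`, time `t`. -/
abbrev FranIdx : Type := (Fin 2 × Fin 2 × ℕ) ⊕ (Fin 2 × Fin 2 × ℕ)

/-- Codomain of each primitive random variable. -/
def FranType : FranIdx → Type
  | .inl _ => Fin 3
  | .inr _ => Bool

instance FranType.instMeasurableSpace : ∀ i, MeasurableSpace (FranType i)
  | .inl _ => inferInstanceAs (MeasurableSpace (Fin 3))
  | .inr _ => inferInstanceAs (MeasurableSpace Bool)

/-- Oblivious 2-user/2-eRRH/2-CP F-RAN model. -/
structure ObliviousFRAN where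
  /-- sample space -/
  Ω : Type
  [mΩ : MeasurableSpace Ω]
  μ : MeasureTheory.Measure Ω
  isProb : MeasureTheory.IsProbabilityMeasure μ
  /-- request rates: `bsplit k n = b_k^{(n+1)}` -/
  bsplit : Fin 2 → Fin 2 → ℝ
  bsplit_nonneg : ∀ k n, 0 ≤ bsplit k n
  bsum_le_one : ∀ k, bsplit k 0 + bsplit k 1 ≤ 1
  /-- command rates -/
  r : Fin 2 → ℝ
  r_nonneg : ∀ k, 0 ≤ r k
  r_le_one : ∀ k, r k ≤ 1
  /-- request variables: value `0` = no request, value `n.succ` = request sent to eRRH `n` -/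
  R : Fin 2 → Fin 2 → ℕ → Ω → Fin 3
  /-- command indicators -/
  γ : Fin 2 → Fin 2 → ℕ → Ω → Bool
  R_meas : ∀ m k t, Measurable (R m k t)
  γ_meas : ∀ n k t, Measurable (γ n k t)
  R_law : ∀ m k t (n : Fin 2), μ {ω | R m k t ω = n.succ} = ENNReal.ofReal (bsplit k n)
  R_law0 : ∀ m k t, μ {ω | R m k t ω = 0} = ENNReal.ofReal (1 - (bsplit k 0 + bsplit k 1))
  γ_law : ∀ n k t, μ {ω | γ n k t ω = true} = ENNReal.ofReal (r k)
  /-- all the primitive random variables are mutually independent -/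
  indep : ProbabilityTheory.iIndepFun (m := fun i => FranType.instMeasurableSpace i)
      (fun i => Sum.rec (motive := fun j => Ω → FranType j)
        (fun p => R p.1 p.2.1 p.2.2) (fun p => γ p.1 p.2.1 p.2.2) i) μ

attribute [instance] ObliviousFRAN.mΩ

open MeasureTheory ProbabilityTheory Filter

namespace ObliviousFRAN

variable (M : ObliviousFRAN)

/-- AoI of CP `k` at eRRH `n`. -/
def g (n k : Fin 2) : ℕ → M.Ω → ℕ
  | 0 => fun _ => 1
  | t + 1 => fun ω =>
      if M.γ n k t ω = true ∧ ∃ m : Fin 2, M.R m k t ω = n.succ then 1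
      else g n k t ω + 1

/-- AoI of CP `k` at user `m`. -/
def h (m k : Fin 2) : ℕ → M.Ω → ℕ
  | 0 => fun _ => 1
  | t + 1 => fun ω =>
      if M.R m k t ω = 0 then h m k t ω + 1
      else if M.R m k t ω = 1 then
        (if M.γ 0 k t ω = true then 1 else min (h m k t ω) (M.g 0 k t ω) + 1)
      else
        (if M.γ 1 k t ω = true then 1 else min (h m k t ω) (M.g 1 k t ω) + 1)

/-- Expected AoI of CP `k` at eRRH `n` at time `t`. -/
noncomputable def Eg (n k : Fin 2) (t : ℕ) : ℝ := ∫ ω, (M.g n k t ω : ℝ) ∂M.μ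

/-- Expected AoI of CP `k` at user `m` at time `t`. -/
noncomputable def Eh (m k : Fin 2) (t : ℕ) : ℝ := ∫ ω, (M.h m k t ω : ℝ) ∂M.μ

/-- Total request rate of a user for CP `k`: `b_k = b_k^{(1)} + b_k^{(2)}`. -/
def bk (k : Fin 2) : ℝ := M.bsplit k 0 + M.bsplit k 1

/-- `ζ_{nk} = 1 - (1 - b_k^{(n)})^2`. -/
def ζ (n k : Fin 2) : ℝ := 1 - (1 - M.bsplit k n) ^ 2

end ObliviousFRAN

section Aux

open MeasurableSpace

open scoped Classical

namespace ObliviousFRAN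

variable (M : ObliviousFRAN)

/-- The family of primitive random variables, as in `M.indep`. -/
def fam : ∀ i : FranIdx, M.Ω → FranType i :=
  fun i => Sum.rec (motive := fun j => M.Ω → FranType j)
    (fun p => M.R p.1 p.2.1 p.2.2) (fun p => M.γ p.1 p.2.1 p.2.2) i

lemma fam_meas : ∀ i, Measurable (M.fam i)
  | .inl p => M.R_meas p.1 p.2.1 p.2.2
  | .inr p => M.γ_meas p.1 p.2.1 p.2.2

/-- time index of a primitive variable -/
def tIdx : FranIdx → ℕ := Sum.elim (fun p => p.2.2) (fun p => p.2.2)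

/-- σ-algebra of the variables before time `t` -/
def past (t : ℕ) : MeasurableSpace M.Ω :=
  ⨆ i ∈ {i : FranIdx | tIdx i < t},
    MeasurableSpace.comap (M.fam i) (FranType.instMeasurableSpace i)

/-- σ-algebra of the variables at times `≥ t` -/
def future (t : ℕ) : MeasurableSpace M.Ω :=
  ⨆ i ∈ {i : FranIdx | tIdx i < t}ᶜ,
    MeasurableSpace.comap (M.fam i) (FranType.instMeasurableSpace i)

lemma past_le (t : ℕ) : M.past t ≤ M.mΩ :=
  iSup₂_le fun i _ => (M.fam_meas i).comap_le

lemma future_le (t : ℕ) : M.future t ≤ M.mΩ :=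
  iSup₂_le fun i _ => (M.fam_meas i).comap_le

lemma comap_le_past {i : FranIdx} {t : ℕ} (hi : tIdx i < t) :
    MeasurableSpace.comap (M.fam i) (FranType.instMeasurableSpace i) ≤ M.past t := by
  show MeasurableSpace.comap (M.fam i) (FranType.instMeasurableSpace i) ≤
    ⨆ j ∈ {j : FranIdx | tIdx j < t},
      MeasurableSpace.comap (M.fam j) (FranType.instMeasurableSpace j)
  exact le_biSup (fun j => MeasurableSpace.comap (M.fam j) (FranType.instMeasurableSpace j)) hi

lemma comap_le_future {i : FranIdx} {t : ℕ} (hi : ¬ tIdx i < t) :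
    MeasurableSpace.comap (M.fam i) (FranType.instMeasurableSpace i) ≤ M.future t := by
  show MeasurableSpace.comap (M.fam i) (FranType.instMeasurableSpace i) ≤
    ⨆ j ∈ {j : FranIdx | tIdx j < t}ᶜ,
      MeasurableSpace.comap (M.fam j) (FranType.instMeasurableSpace j)
  exact le_biSup (fun j => MeasurableSpace.comap (M.fam j) (FranType.instMeasurableSpace j)) hi

lemma past_mono {s t : ℕ} (hst : s ≤ t) : M.past s ≤ M.past t := by
  refine iSup₂_le fun i hi => ?_
  exact M.comap_le_past (lt_of_lt_of_le hi hst)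

lemma indep_past_future (t : ℕ) :
    ProbabilityTheory.Indep (M.past t) (M.future t) M.μ :=
  ProbabilityTheory.indep_biSup_compl (fun i => (M.fam_meas i).comap_le) M.indep
    {i : FranIdx | tIdx i < t}

lemma measurable_past_R {m k : Fin 2} {s t : ℕ} (hst : s < t) :
    Measurable[M.past t] (M.R m k s) :=
  Measurable.of_comap_le (M.comap_le_past (i := Sum.inl (m, k, s)) hst)

lemma measurable_past_γ {n k : Fin 2} {s t : ℕ} (hst : s < t) :
    Measurable[M.past t] (M.γ n k s) :=
  Measurable.of_comap_le (M.comap_le_past (i := Sum.inr (n, k, s)) hst)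

lemma measurable_future_R {m k : Fin 2} {t : ℕ} :
    Measurable[M.future t] (M.R m k t) :=
  Measurable.of_comap_le
    (M.comap_le_future (i := Sum.inl (m, k, t)) (lt_irrefl t))

lemma measurable_future_γ {n k : Fin 2} {t : ℕ} :
    Measurable[M.future t] (M.γ n k t) :=
  Measurable.of_comap_le
    (M.comap_le_future (i := Sum.inr (n, k, t)) (lt_irrefl t))

lemma g_meas_past (n k : Fin 2) : ∀ t : ℕ, Measurable[M.past t] (M.g n k t)
  | 0 => measurable_const
  | (t + 1) => by
      have hg : Measurable[M.past (t + 1)] (M.g n k t) :=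
        (g_meas_past n k t).mono (M.past_mono (Nat.le_succ t)) le_rfl
      have hγ : Measurable[M.past (t + 1)] (M.γ n k t) :=
        M.measurable_past_γ (Nat.lt_succ_self t)
      have hR : ∀ m : Fin 2, Measurable[M.past (t + 1)] (M.R m k t) :=
        fun m => M.measurable_past_R (Nat.lt_succ_self t)
      show Measurable[M.past (t + 1)] fun ω =>
        if M.γ n k t ω = true ∧ ∃ m : Fin 2, M.R m k t ω = n.succ then 1
        else M.g n k t ω + 1
      refine Measurable.ite ?_ measurable_const (hg.add_const 1)
      have hset : {ω | M.γ n k t ω = true ∧ ∃ m : Fin 2, M.R m k t ω = n.succ}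
          = M.γ n k t ⁻¹' {true} ∩ (M.R 0 k t ⁻¹' {n.succ} ∪ M.R 1 k t ⁻¹' {n.succ}) := by
        ext ω
        simp [Fin.exists_fin_two, and_comm]
      rw [hset]
      exact (hγ (measurableSet_singleton true)).inter
        (((hR 0) (measurableSet_singleton _)).union ((hR 1) (measurableSet_singleton _)))

lemma h_meas_past (m k : Fin 2) : ∀ t : ℕ, Measurable[M.past t] (M.h m k t)
  | 0 => measurable_const
  | (t + 1) => by
      have hh : Measurable[M.past (t + 1)] (M.h m k t) :=
        (h_meas_past m k t).mono (M.past_mono (Nat.le_succ t)) le_rfl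
      have hg : ∀ n : Fin 2, Measurable[M.past (t + 1)] (M.g n k t) :=
        fun n => (M.g_meas_past n k t).mono (M.past_mono (Nat.le_succ t)) le_rfl
      have hγ : ∀ n : Fin 2, Measurable[M.past (t + 1)] (M.γ n k t) :=
        fun n => M.measurable_past_γ (Nat.lt_succ_self t)
      have hR : Measurable[M.past (t + 1)] (M.R m k t) :=
        M.measurable_past_R (Nat.lt_succ_self t)
      have hRs : ∀ v : Fin 3, MeasurableSet[M.past (t + 1)] {ω | M.R m k t ω = v} :=
        fun v => hR (measurableSet_singleton v)
      have hγs : ∀ n : Fin 2, MeasurableSet[M.past (t + 1)] {ω | M.γ n k t ω = true} :=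
        fun n => (hγ n) (measurableSet_singleton true)
      show Measurable[M.past (t + 1)] fun ω =>
        if M.R m k t ω = 0 then M.h m k t ω + 1
        else if M.R m k t ω = 1 then
          (if M.γ 0 k t ω = true then 1 else min (M.h m k t ω) (M.g 0 k t ω) + 1)
        else
          (if M.γ 1 k t ω = true then 1 else min (M.h m k t ω) (M.g 1 k t ω) + 1)
      refine Measurable.ite (hRs 0) (hh.add_const 1) ?_
      refine Measurable.ite (hRs 1) ?_ ?_
      · exact Measurable.ite (hγs 0) measurable_const ((hh.min (hg 0)).add_const 1)
      · exact Measurable.ite (hγs 1) measurable_const ((hh.min (hg 1)).add_const 1)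

lemma h_meas (m k : Fin 2) (t : ℕ) : Measurable (M.h m k t) :=
  (M.h_meas_past m k t).mono (M.past_le t) le_rfl

lemma h_le (m k : Fin 2) : ∀ (t : ℕ) (ω : M.Ω), M.h m k t ω ≤ t + 1
  | 0, ω => le_rfl
  | (t + 1), ω => by
      have ih := h_le m k t ω
      show (if M.R m k t ω = 0 then M.h m k t ω + 1
        else if M.R m k t ω = 1 then
          (if M.γ 0 k t ω = true then 1 else min (M.h m k t ω) (M.g 0 k t ω) + 1)
        else
          (if M.γ 1 k t ω = true then 1 else min (M.h m k t ω) (M.g 1 k t ω) + 1)) ≤ t + 1 + 1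
      have hmin : ∀ n : Fin 2, min (M.h m k t ω) (M.g n k t ω) ≤ t + 1 :=
        fun n => le_trans (min_le_left _ _) ih
      split_ifs <;> omega

lemma h_integrable (m k : Fin 2) (t : ℕ) :
    MeasureTheory.Integrable (fun ω => (M.h m k t ω : ℝ)) M.μ := by
  haveI := M.isProb
  refine (MeasureTheory.integrable_const ((t : ℝ) + 1)).mono'
    ((measurable_from_top.comp (M.h_meas m k t)).aestronglyMeasurable) ?_
  filter_upwards with ω
  rw [Real.norm_eq_abs, abs_of_nonneg (by positivity)]
  exact_mod_cast M.h_le m k t ω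

/-- The "direct success" event for user `m`, CP `k` at time `t`. -/
def Bev (m k : Fin 2) (t : ℕ) : Set M.Ω :=
  (M.R m k t ⁻¹' {1} ∩ M.γ 0 k t ⁻¹' {true}) ∪ (M.R m k t ⁻¹' {2} ∩ M.γ 1 k t ⁻¹' {true})

/-- indicator-type function of the complement of `Bev` -/
noncomputable def ψ (m k : Fin 2) (t : ℕ) : M.Ω → ℝ :=
  fun ω => if ω ∈ M.Bev m k t then 0 else 1

lemma Bev_measurable_future (m k : Fin 2) (t : ℕ) :
    MeasurableSet[M.future t] (M.Bev m k t) := by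
  have hR : Measurable[M.future t] (M.R m k t) := M.measurable_future_R
  have hγ : ∀ n : Fin 2, Measurable[M.future t] (M.γ n k t) := fun n => M.measurable_future_γ
  exact ((hR (measurableSet_singleton _)).inter ((hγ 0) (measurableSet_singleton _))).union
    ((hR (measurableSet_singleton _)).inter ((hγ 1) (measurableSet_singleton _)))

lemma Bev_measurable (m k : Fin 2) (t : ℕ) : MeasurableSet (M.Bev m k t) :=
  (M.future_le t) _ (M.Bev_measurable_future m k t)

lemma ψ_meas_future (m k : Fin 2) (t : ℕ) : Measurable[M.future t] (M.ψ m k t) :=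
  Measurable.ite (M.Bev_measurable_future m k t) measurable_const measurable_const

lemma indep_h_ψ (m k : Fin 2) (t : ℕ) :
    ProbabilityTheory.IndepFun (fun ω => (M.h m k t ω : ℝ)) (M.ψ m k t) M.μ := by
  have hbase := M.indep_past_future t
  have h1 : Measurable[M.past t] (fun ω => (M.h m k t ω : ℝ)) :=
    measurable_from_top.comp (M.h_meas_past m k t)
  have h2 : Measurable[M.future t] (M.ψ m k t) := M.ψ_meas_future m k t
  exact ProbabilityTheory.Kernel.indep_of_indep_of_le_left
    (ProbabilityTheory.Kernel.indep_of_indep_of_le_right hbase h2.comap_le) h1.comap_le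

lemma measure_Bev (m k : Fin 2) (t : ℕ) :
    M.μ (M.Bev m k t) = ENNReal.ofReal (M.bk k * M.r k) := by
  have hR1 : M.μ (M.R m k t ⁻¹' {1}) = ENNReal.ofReal (M.bsplit k 0) := by
    have hset : M.R m k t ⁻¹' {1} = {ω | M.R m k t ω = (0 : Fin 2).succ} := by
      ext ω
      simp only [Set.mem_preimage, Set.mem_singleton_iff, Set.mem_setOf_eq]
      constructor <;> intro h <;> (rw [h]; decide)
    rw [hset, M.R_law m k t 0]
  have hR2 : M.μ (M.R m k t ⁻¹' {2}) = ENNReal.ofReal (M.bsplit k 1) := by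
    have hset : M.R m k t ⁻¹' {2} = {ω | M.R m k t ω = (1 : Fin 2).succ} := by
      ext ω
      simp only [Set.mem_preimage, Set.mem_singleton_iff, Set.mem_setOf_eq]
      constructor <;> intro h <;> (rw [h]; decide)
    rw [hset, M.R_law m k t 1]
  have hγ : ∀ n : Fin 2, M.μ (M.γ n k t ⁻¹' {true}) = ENNReal.ofReal (M.r k) := by
    intro n
    have hset : M.γ n k t ⁻¹' {true} = {ω | M.γ n k t ω = true} := rfl
    rw [hset, M.γ_law n k t]
  have hind0 : ProbabilityTheory.IndepFun (M.R m k t) (M.γ 0 k t) M.μ :=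
    M.indep.indepFun (show (Sum.inl (m, k, t) : FranIdx) ≠ Sum.inr (0, k, t) by simp)
  have hind1 : ProbabilityTheory.IndepFun (M.R m k t) (M.γ 1 k t) M.μ :=
    M.indep.indepFun (show (Sum.inl (m, k, t) : FranIdx) ≠ Sum.inr (1, k, t) by simp)
  have h1 : M.μ (M.R m k t ⁻¹' {1} ∩ M.γ 0 k t ⁻¹' {true})
      = ENNReal.ofReal (M.bsplit k 0) * ENNReal.ofReal (M.r k) := by
    rw [hind0.measure_inter_preimage_eq_mul {(1 : Fin 3)} {true}
      (measurableSet_singleton _) (measurableSet_singleton _), hR1, hγ 0]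
  have h2 : M.μ (M.R m k t ⁻¹' {2} ∩ M.γ 1 k t ⁻¹' {true})
      = ENNReal.ofReal (M.bsplit k 1) * ENNReal.ofReal (M.r k) := by
    rw [hind1.measure_inter_preimage_eq_mul {(2 : Fin 3)} {true}
      (measurableSet_singleton _) (measurableSet_singleton _), hR2, hγ 1]
  have hdisj : Disjoint (M.R m k t ⁻¹' {1} ∩ M.γ 0 k t ⁻¹' {true})
      (M.R m k t ⁻¹' {2} ∩ M.γ 1 k t ⁻¹' {true}) := by
    refine Set.disjoint_left.2 fun ω hω hω' => ?_
    have e1 : M.R m k t ω = 1 := hω.1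
    have e2 : M.R m k t ω = 2 := hω'.1
    rw [e1] at e2
    exact absurd e2 (by decide)
  have hmeas2 : MeasurableSet (M.R m k t ⁻¹' {2} ∩ M.γ 1 k t ⁻¹' {true}) :=
    ((M.R_meas m k t) (measurableSet_singleton _)).inter
      ((M.γ_meas 1 k t) (measurableSet_singleton _))
  rw [Bev, MeasureTheory.measure_union hdisj hmeas2, h1, h2,
    ← ENNReal.ofReal_mul (M.bsplit_nonneg k 0), ← ENNReal.ofReal_mul (M.bsplit_nonneg k 1),
    ← ENNReal.ofReal_add (mul_nonneg (M.bsplit_nonneg k 0) (M.r_nonneg k))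
      (mul_nonneg (M.bsplit_nonneg k 1) (M.r_nonneg k))]
  congr 1
  rw [bk]
  ring

lemma bk_nonneg (k : Fin 2) : 0 ≤ M.bk k :=
  add_nonneg (M.bsplit_nonneg k 0) (M.bsplit_nonneg k 1)

lemma bk_le_one (k : Fin 2) : M.bk k ≤ 1 := M.bsum_le_one k

lemma br_le_one (k : Fin 2) : M.bk k * M.r k ≤ 1 :=
  mul_le_one₀ (M.bk_le_one k) (M.r_nonneg k) (M.r_le_one k)

lemma integral_ψ (m k : Fin 2) (t : ℕ) :
    ∫ ω, M.ψ m k t ω ∂M.μ = 1 - M.bk k * M.r k := by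
  haveI := M.isProb
  have hpt : ∀ ω, M.ψ m k t ω = 1 - Set.indicator (M.Bev m k t) (fun _ => (1 : ℝ)) ω := by
    intro ω
    by_cases hω : ω ∈ M.Bev m k t <;> simp [ψ, hω]
  rw [MeasureTheory.integral_congr_ae (Filter.Eventually.of_forall hpt)]
  rw [MeasureTheory.integral_sub (MeasureTheory.integrable_const 1)
    (MeasureTheory.IntegrableOn.integrable_indicator
      (MeasureTheory.integrableOn_const (MeasureTheory.measure_ne_top _ _))
      (M.Bev_measurable m k t))]
  rw [MeasureTheory.integral_indicator_const (1 : ℝ) (M.Bev_measurable m k t)]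
  rw [MeasureTheory.integral_const, measureReal_def, measureReal_def, M.measure_Bev m k t]
  simp [ENNReal.toReal_ofReal (mul_nonneg (M.bk_nonneg k) (M.r_nonneg k))]

lemma ψ_integrable (m k : Fin 2) (t : ℕ) :
    MeasureTheory.Integrable (M.ψ m k t) M.μ := by
  haveI := M.isProb
  refine (MeasureTheory.integrable_const (1 : ℝ)).mono'
    ((M.ψ_meas_future m k t).mono (M.future_le t) le_rfl).aestronglyMeasurable ?_
  filter_upwards with ω
  by_cases hω : ω ∈ M.Bev m k t <;> simp [ψ, hω]

lemma h_pointwise_step (m k : Fin 2) (t : ℕ) (ω : M.Ω) :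
    (M.h m k (t + 1) ω : ℝ) ≤ 1 + M.ψ m k t ω * (M.h m k t ω : ℝ) := by
  have htri : ∀ v : Fin 3, v = 0 ∨ v = 1 ∨ v = 2 := by decide
  have hmem : ω ∈ M.Bev m k t ↔
      (M.R m k t ω = 1 ∧ M.γ 0 k t ω = true) ∨ (M.R m k t ω = 2 ∧ M.γ 1 k t ω = true) := by
    simp [Bev]
  show ((if M.R m k t ω = 0 then M.h m k t ω + 1
      else if M.R m k t ω = 1 then
        (if M.γ 0 k t ω = true then 1 else min (M.h m k t ω) (M.g 0 k t ω) + 1)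
      else
        (if M.γ 1 k t ω = true then 1 else min (M.h m k t ω) (M.g 1 k t ω) + 1) : ℕ) : ℝ)
    ≤ 1 + M.ψ m k t ω * (M.h m k t ω : ℝ)
  unfold ψ
  rcases htri (M.R m k t ω) with hR | hR | hR
  · have hb : ω ∉ M.Bev m k t := by
      rw [hmem]; rw [hR]; simp
    simp only [hR, if_pos rfl, if_neg hb]
    push_cast; ring_nf; simp
  · rw [hR]
    cases hγ : M.γ 0 k t ω
    · have hb : ω ∉ M.Bev m k t := by rw [hmem, hR, hγ]; simp
      simp only [if_neg (by decide : ¬ (1 : Fin 3) = 0), if_pos rfl, hγ,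
        if_neg (by simp : ¬ (false = true)), if_neg hb]
      push_cast
      have hmin : min ((M.h m k t ω : ℕ) : ℝ) ((M.g 0 k t ω : ℕ) : ℝ)
          ≤ ((M.h m k t ω : ℕ) : ℝ) := min_le_left _ _
      linarith
    · have hb : ω ∈ M.Bev m k t := by rw [hmem, hR, hγ]; simp
      simp only [if_neg (by decide : ¬ (1 : Fin 3) = 0), if_pos rfl, hγ, if_pos rfl,
        if_pos hb]
      norm_num
  · rw [hR]
    cases hγ : M.γ 1 k t ω
    · have hb : ω ∉ M.Bev m k t := by rw [hmem, hR, hγ]; simp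
      simp only [if_neg (by decide : ¬ (2 : Fin 3) = 0), if_neg (by decide : ¬ (2 : Fin 3) = 1),
        hγ, if_neg (by simp : ¬ (false = true)), if_neg hb]
      push_cast
      have hmin : min ((M.h m k t ω : ℕ) : ℝ) ((M.g 1 k t ω : ℕ) : ℝ)
          ≤ ((M.h m k t ω : ℕ) : ℝ) := min_le_left _ _
      linarith
    · have hb : ω ∈ M.Bev m k t := by rw [hmem, hR, hγ]; simp
      simp only [if_neg (by decide : ¬ (2 : Fin 3) = 0), if_neg (by decide : ¬ (2 : Fin 3) = 1),
        hγ, if_pos rfl, if_pos hb]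
      norm_num

lemma Eh_step (m k : Fin 2) (t : ℕ) :
    M.Eh m k (t + 1) ≤ 1 + (1 - M.bk k * M.r k) * M.Eh m k t := by
  haveI := M.isProb
  have hψh : MeasureTheory.Integrable (fun ω => M.ψ m k t ω * (M.h m k t ω : ℝ)) M.μ := by
    refine MeasureTheory.Integrable.bdd_mul (c := 1) (M.h_integrable m k t)
      ((M.ψ_meas_future m k t).mono (M.future_le t) le_rfl).aestronglyMeasurable ?_
    refine Filter.Eventually.of_forall fun ω => ?_
    by_cases hω : ω ∈ M.Bev m k t <;> simp [ψ, hω]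
  have hmono : M.Eh m k (t + 1) ≤ ∫ ω, (1 + M.ψ m k t ω * (M.h m k t ω : ℝ)) ∂M.μ := by
    refine MeasureTheory.integral_mono (M.h_integrable m k (t + 1))
      ((MeasureTheory.integrable_const 1).add hψh) ?_
    exact fun ω => M.h_pointwise_step m k t ω
  have hsplit : ∫ ω, (1 + M.ψ m k t ω * (M.h m k t ω : ℝ)) ∂M.μ
      = 1 + ∫ ω, M.ψ m k t ω * (M.h m k t ω : ℝ) ∂M.μ := by
    rw [MeasureTheory.integral_add (MeasureTheory.integrable_const 1) hψh]
    simp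
  have hprod : ∫ ω, M.ψ m k t ω * (M.h m k t ω : ℝ) ∂M.μ
      = (1 - M.bk k * M.r k) * M.Eh m k t := by
    have := ((M.indep_h_ψ m k t).symm).integral_fun_mul_eq_mul_integral
      (M.ψ_integrable m k t).aestronglyMeasurable (M.h_integrable m k t).aestronglyMeasurable
    calc ∫ ω, M.ψ m k t ω * (M.h m k t ω : ℝ) ∂M.μ
        = ∫ ω, (M.ψ m k t * fun ω => (M.h m k t ω : ℝ)) ω ∂M.μ := rfl
      _ = (∫ ω, M.ψ m k t ω ∂M.μ) * ∫ ω, (M.h m k t ω : ℝ) ∂M.μ := this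
      _ = (1 - M.bk k * M.r k) * M.Eh m k t := by rw [M.integral_ψ m k t]; rfl
  calc M.Eh m k (t + 1) ≤ ∫ ω, (1 + M.ψ m k t ω * (M.h m k t ω : ℝ)) ∂M.μ := hmono
    _ = 1 + (1 - M.bk k * M.r k) * M.Eh m k t := by rw [hsplit, hprod]

lemma Eh_le (m k : Fin 2) (hbr : 0 < M.bk k * M.r k) :
    ∀ t : ℕ, M.Eh m k t ≤ 1 / (M.bk k * M.r k)
  | 0 => by
      haveI := M.isProb
      have : M.Eh m k 0 = 1 := by
        rw [Eh]
        simp [ObliviousFRAN.h]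
      rw [this]
      rw [le_div_iff₀ hbr, one_mul]
      exact M.br_le_one k
  | (t + 1) => by
      have ih := Eh_le m k hbr t
      have hstep := M.Eh_step m k t
      have h1 : (1 - M.bk k * M.r k) * M.Eh m k t ≤ (1 - M.bk k * M.r k) / (M.bk k * M.r k) := by
        rw [div_eq_mul_inv, ← mul_le_mul_iff_of_pos_left (show (0:ℝ) < 1 from one_pos)]
        calc (1 : ℝ) * ((1 - M.bk k * M.r k) * M.Eh m k t)
            = (1 - M.bk k * M.r k) * M.Eh m k t := by ring
          _ ≤ (1 - M.bk k * M.r k) * (1 / (M.bk k * M.r k)) := by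
              apply mul_le_mul_of_nonneg_left ih
              linarith [M.br_le_one k]
          _ = 1 * ((1 - M.bk k * M.r k) * (M.bk k * M.r k)⁻¹) := by ring
      have h2 : 1 + (1 - M.bk k * M.r k) / (M.bk k * M.r k) = 1 / (M.bk k * M.r k) := by
        rw [eq_div_iff hbr.ne', add_mul, div_mul_cancel₀ _ hbr.ne']; ring
      linarith

lemma Eh_nonneg (m k : Fin 2) (t : ℕ) : 0 ≤ M.Eh m k t :=
  MeasureTheory.integral_nonneg fun ω => by positivity

end ObliviousFRAN

end Aux

/-- Theorem 2, second bound. -/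
theorem stmt5 (M : ObliviousFRAN) (hpos : ∀ k : Fin 2, 0 < M.bk k * M.r k)
    (hpos' : ∀ n k : Fin 2, 0 < M.r k * M.ζ n k) :
    limsup
      (fun T : ℕ =>
        (1 / (T : ℝ)) * ∑ t ∈ Finset.Icc 1 T,
          (1 / 4 : ℝ) * ∑ m : Fin 2, ∑ k : Fin 2, M.Eh m k t)
      atTop
    ≤ (1 / 2 : ℝ) * ∑ k : Fin 2,
        ((1 - M.bk k + M.bk k * M.r k) / (M.bk k * M.r k)
          + ∑ n : Fin 2, M.bsplit k n * (1 - M.r k) / (M.r k * M.ζ n k)) := by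
  haveI := M.isProb
  set D : ℝ := (1 / 2 : ℝ) * ∑ k : Fin 2,
      ((1 - M.bk k + M.bk k * M.r k) / (M.bk k * M.r k)
        + ∑ n : Fin 2, M.bsplit k n * (1 - M.r k) / (M.r k * M.ζ n k)) with hD
  -- basic positivity facts
  have hr : ∀ k : Fin 2, 0 < M.r k := by
    intro k
    rcases (M.r_nonneg k).lt_or_eq with h | h
    · exact h
    · exfalso
      have := hpos' 0 k
      rw [← h] at this
      simp at this
  have hζ : ∀ n k : Fin 2, 0 < M.ζ n k := by
    intro n k
    by_contra hc
    push_neg at hc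
    have := hpos' n k
    nlinarith [hr k]
  have hbn : ∀ n k : Fin 2, 0 < M.bsplit k n := by
    intro n k
    rcases (M.bsplit_nonneg k n).lt_or_eq with h | h
    · exact h
    · exfalso
      have := hζ n k
      rw [ObliviousFRAN.ζ, ← h] at this
      norm_num at this
  have hbn1 : ∀ n k : Fin 2, M.bsplit k n ≤ 1 := by
    intro n k
    have h0 := M.bsplit_nonneg k 0
    have h1 := M.bsplit_nonneg k 1
    have hs := M.bsum_le_one k
    fin_cases n <;> simp <;> linarith
  -- the per-k comparison of 1/(b r) with the stated bound
  have hfact : ∀ k : Fin 2, 1 / (M.bk k * M.r k) ≤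
      (1 - M.bk k + M.bk k * M.r k) / (M.bk k * M.r k)
        + ∑ n : Fin 2, M.bsplit k n * (1 - M.r k) / (M.r k * M.ζ n k) := by
    intro k
    have hbr := hpos k
    have hrk := hr k
    have hsum : 1 ≤ ∑ n : Fin 2, M.bsplit k n / M.ζ n k := by
      rw [Fin.sum_univ_two]
      have hx := hbn 0 k
      have hy := hbn 1 k
      have hx1 := hbn1 0 k
      have hy1 := hbn1 1 k
      have hζx := hζ 0 k
      have hζy := hζ 1 k
      rw [div_add_div _ _ hζx.ne' hζy.ne', le_div_iff₀ (mul_pos hζx hζy)]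
      have hxy : 0 ≤ M.bsplit k 0 + M.bsplit k 1 - M.bsplit k 0 * M.bsplit k 1 := by
        nlinarith [mul_nonneg hx.le (sub_nonneg.2 hy1)]
      simp only [ObliviousFRAN.ζ]
      nlinarith [mul_nonneg (mul_nonneg hx.le hy.le) hxy]
    have hS : ∑ n : Fin 2, M.bsplit k n * (1 - M.r k) / (M.r k * M.ζ n k)
        = (1 - M.r k) / M.r k * ∑ n : Fin 2, M.bsplit k n / M.ζ n k := by
      rw [Finset.mul_sum]
      refine Finset.sum_congr rfl fun n _ => ?_
      field_simp
    have hS' : (1 - M.r k) / M.r k ≤ ∑ n : Fin 2, M.bsplit k n * (1 - M.r k) / (M.r k * M.ζ n k) := by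
      rw [hS]
      calc (1 - M.r k) / M.r k = (1 - M.r k) / M.r k * 1 := by ring
        _ ≤ (1 - M.r k) / M.r k * ∑ n : Fin 2, M.bsplit k n / M.ζ n k := by
            apply mul_le_mul_of_nonneg_left hsum
            apply div_nonneg _ hrk.le
            linarith [M.r_le_one k]
    have hid : (1 - M.bk k + M.bk k * M.r k) / (M.bk k * M.r k)
        = 1 / (M.bk k * M.r k) - (1 - M.r k) / M.r k := by
      have hb : M.bk k ≠ 0 := by
        intro h
        rw [h] at hbr
        simp at hbr
      field_simp
      ring
    rw [hid]
    linarith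
  -- each time-slot term is at most D
  have hterm : ∀ t : ℕ, (1 / 4 : ℝ) * ∑ m : Fin 2, ∑ k : Fin 2, M.Eh m k t ≤ D := by
    intro t
    have hEh : ∀ m k : Fin 2, M.Eh m k t ≤ 1 / (M.bk k * M.r k) :=
      fun m k => M.Eh_le m k (hpos k) t
    have h1 : ∑ m : Fin 2, ∑ k : Fin 2, M.Eh m k t
        ≤ ∑ m : Fin 2, ∑ k : Fin 2, 1 / (M.bk k * M.r k) := by
      refine Finset.sum_le_sum fun m _ => Finset.sum_le_sum fun k _ => hEh m k
    have h2 : ∑ m : Fin 2, ∑ k : Fin 2, (1 / (M.bk k * M.r k) : ℝ)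
        = 2 * ∑ k : Fin 2, 1 / (M.bk k * M.r k) := by
      rw [Fin.sum_univ_two]
      ring
    have h3 : ∑ k : Fin 2, (1 / (M.bk k * M.r k) : ℝ)
        ≤ ∑ k : Fin 2, ((1 - M.bk k + M.bk k * M.r k) / (M.bk k * M.r k)
          + ∑ n : Fin 2, M.bsplit k n * (1 - M.r k) / (M.r k * M.ζ n k)) :=
      Finset.sum_le_sum fun k _ => hfact k
    rw [hD]
    calc (1 / 4 : ℝ) * ∑ m : Fin 2, ∑ k : Fin 2, M.Eh m k t
        ≤ (1 / 4 : ℝ) * (2 * ∑ k : Fin 2, 1 / (M.bk k * M.r k)) := by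
          rw [← h2]; linarith [h1]
      _ = (1 / 2 : ℝ) * ∑ k : Fin 2, 1 / (M.bk k * M.r k) := by ring
      _ ≤ (1 / 2 : ℝ) * ∑ k : Fin 2, ((1 - M.bk k + M.bk k * M.r k) / (M.bk k * M.r k)
          + ∑ n : Fin 2, M.bsplit k n * (1 - M.r k) / (M.r k * M.ζ n k)) := by
          linarith [h3]
  have hD0 : 0 ≤ D := by
    refine le_trans ?_ (hterm 0)
    have : ∀ m k : Fin 2, 0 ≤ M.Eh m k 0 := fun m k => M.Eh_nonneg m k 0
    have hs : 0 ≤ ∑ m : Fin 2, ∑ k : Fin 2, M.Eh m k 0 :=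
      Finset.sum_nonneg fun m _ => Finset.sum_nonneg fun k _ => this m k
    positivity
  -- every value of the sequence is at most D
  have hall : ∀ T : ℕ,
      (1 / (T : ℝ)) * ∑ t ∈ Finset.Icc 1 T,
        (1 / 4 : ℝ) * ∑ m : Fin 2, ∑ k : Fin 2, M.Eh m k t ≤ D := by
    intro T
    rcases Nat.eq_zero_or_pos T with hT | hT
    · subst hT
      simp [hD0]
    · have hsum : ∑ t ∈ Finset.Icc 1 T,
          (1 / 4 : ℝ) * ∑ m : Fin 2, ∑ k : Fin 2, M.Eh m k t ≤ (T : ℝ) * D := by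
        calc ∑ t ∈ Finset.Icc 1 T, (1 / 4 : ℝ) * ∑ m : Fin 2, ∑ k : Fin 2, M.Eh m k t
            ≤ ∑ _t ∈ Finset.Icc 1 T, D := Finset.sum_le_sum fun t _ => hterm t
          _ = ((Finset.Icc 1 T).card : ℝ) * D := by rw [Finset.sum_const, nsmul_eq_mul]
          _ = (T : ℝ) * D := by rw [Nat.card_Icc]; simp
      have hTpos : (0 : ℝ) < (T : ℝ) := by exact_mod_cast hT
      calc (1 / (T : ℝ)) * ∑ t ∈ Finset.Icc 1 T,
            (1 / 4 : ℝ) * ∑ m : Fin 2, ∑ k : Fin 2, M.Eh m k t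
          ≤ (1 / (T : ℝ)) * ((T : ℝ) * D) := by
            apply mul_le_mul_of_nonneg_left hsum
            positivity
        _ = D := by field_simp
  refine Filter.limsup_le_of_le ?_ (Filter.Eventually.of_forall hall)
  refine Filter.isCoboundedUnder_le_of_le Filter.atTop (x := 0) fun T => ?_
  have hs : 0 ≤ ∑ t ∈ Finset.Icc 1 T,
      (1 / 4 : ℝ) * ∑ m : Fin 2, ∑ k : Fin 2, M.Eh m k t := by
    refine Finset.sum_nonneg fun t _ => ?_
    have : 0 ≤ ∑ m : Fin 2, ∑ k : Fin 2, M.Eh m k t :=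
      Finset.sum_nonneg fun m _ => Finset.sum_nonneg fun k _ => M.Eh_nonneg m k t
    positivity
  positivity
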